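/- Let $H$ be a Hilbert space and $u, f \in H$ with $\|u\| = \|f\| = 1$. For $\rho \in [\frac{1}{2}, 1]$ define operators $U\psi = \rho\psi + (1-\rho)\langle \psi, u\rangle u$ and $V\psi = (2\rho - 1)\psi + 2(1-\rho)\langle\psi, v\rangle v$ where $\|v\| = 1$. Then $U$ and $V$ are self-adjoint positive contractions, and if $(2|\langle u, v\rangle|^2 - 1)(2|\langle f, v\rangle|^2 - 1) \le |\langle f, u\rangle|^2$ holds for all unit $f$ (which it does when $2|\langle u,v\rangle|^2 \ge 1$), then $(2\rho - 1 + 2(1-\rho)|\langle u,v\rangle|^2) V \le U$ as quadratic forms. -/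

import Mathlib

lemma uperp_sq' {E : Type*} [NormedAddCommGroup E] [InnerProductSpace ℂ E]
    (u v : E) (hu : ‖u‖ = 1) (hv : ‖v‖ = 1) :
    ‖u - (inner ℂ v u : ℂ) • v‖ ^ 2 = 1 - ‖(inner ℂ u v : ℂ)‖ ^ 2 := by
  have h3 := norm_sub_sq (𝕜 := ℂ) u ((inner ℂ v u : ℂ) • v)
  rw [inner_smul_right] at h3
  rw [show (inner ℂ v u : ℂ) = (starRingEnd ℂ) (inner ℂ u v) from (inner_conj_symm v u).symm] at h3 ⊢
  rw [show ((starRingEnd ℂ) (inner ℂ u v : ℂ)) * (inner ℂ u v : ℂ)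
      = (Complex.normSq (inner ℂ u v : ℂ) : ℂ) from (Complex.normSq_eq_conj_mul_self).symm] at h3
  rw [h3, Complex.normSq_eq_norm_sq]
  simp only [norm_smul, hu, hv, ← Complex.ofReal_pow, Complex.ofReal_re, RCLike.ofReal_re,
    RCLike.norm_conj, mul_one]
  simp [← Complex.ofReal_pow]; ring

lemma real_key' (p q r c m : ℝ) (hp0 : 0 ≤ p) (hq0 : 0 ≤ q) (hr0 : 0 ≤ r)
    (hc0 : 0 ≤ c) (hp2 : 1 ≤ 2 * p ^ 2) (hp1 : p ≤ 1) (hqm : q ≤ m)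
    (hc : c ^ 2 ≤ (1 - p ^ 2) * (m ^ 2 - q ^ 2))
    (htri : p * q ≤ r + c) :
    2 * p ^ 2 * q ^ 2 ≤ r ^ 2 + m ^ 2 := by
  have hm0 : 0 ≤ m := le_trans hq0 hqm
  have hmq : 0 ≤ m ^ 2 - q ^ 2 := by nlinarith
  rcases le_or_gt (p * q) c with h | h
  · nlinarith [mul_self_le_mul_self (mul_nonneg hp0 hq0) h, sq_nonneg r]
  · have h1 : (p * q - c) ^ 2 ≤ r ^ 2 := by nlinarith
    have hkey : 2 * (p * q) * c ≤ p ^ 2 * (m ^ 2 - q ^ 2) + q ^ 2 * (1 - p ^ 2) := by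
      nlinarith [sq_nonneg (p ^ 2 * (m ^ 2 - q ^ 2) - q ^ 2 * (1 - p ^ 2)),
        mul_nonneg (mul_nonneg hp0 hq0) hc0,
        mul_le_mul_of_nonneg_left hc (by positivity : (0:ℝ) ≤ 4 * (p*q)^2),
        mul_nonneg (sq_nonneg p) hmq, mul_nonneg (sq_nonneg q) (by nlinarith : (0:ℝ) ≤ 1 - p^2)]
    nlinarith [sq_nonneg c, mul_nonneg (by nlinarith : (0:ℝ) ≤ 1 - p^2) hmq]

lemma inner_key' {E : Type*} [NormedAddCommGroup E] [InnerProductSpace ℂ E]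
    (u v : E) (hu : ‖u‖ = 1) (hv : ‖v‖ = 1)
    (huv : 1 ≤ 2 * ‖(inner ℂ u v : ℂ)‖ ^ 2) (ψ : E) :
    2 * ‖(inner ℂ u v : ℂ)‖ ^ 2 * ‖(inner ℂ v ψ : ℂ)‖ ^ 2 ≤ ‖(inner ℂ u ψ : ℂ)‖ ^ 2 + ‖ψ‖ ^ 2 := by
  set β : ℂ := inner ℂ v ψ with hβ
  set w : E := ψ - β • v with hwdef
  have hvw : (inner ℂ v w : ℂ) = 0 := by
    simp [hwdef, inner_sub_right, inner_smul_right, inner_self_eq_norm_sq_to_K, hv, hβ]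
  have hψ : ψ = β • v + w := by simp [hwdef]
  have hw2 : ‖w‖ ^ 2 = ‖ψ‖ ^ 2 - ‖β‖ ^ 2 := by
    have h0 : (inner ℂ (β • v) w : ℂ) = 0 := by
      rw [inner_smul_left, hvw, mul_zero]
    have h5 := norm_add_sq (𝕜 := ℂ) (β • v) w
    rw [h0, ← hψ] at h5
    simp [norm_smul, hv] at h5
    rw [h5]; ring
  have huψ : (inner ℂ u ψ : ℂ) = β * inner ℂ u v + inner ℂ u w := by
    conv_lhs => rw [hψ]
    rw [inner_add_right, inner_smul_right]
  have hc : ‖(inner ℂ u w : ℂ)‖ ^ 2 ≤ (1 - ‖(inner ℂ u v : ℂ)‖ ^ 2) * (‖ψ‖ ^ 2 - ‖β‖ ^ 2) := by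
    rw [← hw2]
    have h1 : (inner ℂ (u - (inner ℂ v u : ℂ) • v) w : ℂ) = inner ℂ u w := by
      simp [inner_sub_left, inner_smul_left, hvw]
    have h2 := uperp_sq' u v hu hv
    have h4 := norm_inner_le_norm (𝕜 := ℂ) (u - (inner ℂ v u : ℂ) • v) w
    rw [h1] at h4
    have h6 : ‖(inner ℂ u w : ℂ)‖ ^ 2 ≤ ‖u - (inner ℂ v u : ℂ) • v‖ ^ 2 * ‖w‖ ^ 2 := by
      nlinarith [norm_nonneg (inner ℂ u w : ℂ), norm_nonneg w, norm_nonneg (u - (inner ℂ v u : ℂ) • v)]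
    rwa [h2] at h6
  have htri : ‖(inner ℂ u v : ℂ)‖ * ‖β‖ ≤ ‖(inner ℂ u ψ : ℂ)‖ + ‖(inner ℂ u w : ℂ)‖ := by
    have heq : β * inner ℂ u v = inner ℂ u ψ - inner ℂ u w := by rw [huψ]; ring
    calc ‖(inner ℂ u v : ℂ)‖ * ‖β‖ = ‖β * inner ℂ u v‖ := by rw [norm_mul]; ring
    _ = ‖(inner ℂ u ψ : ℂ) - inner ℂ u w‖ := by rw [heq]
    _ ≤ ‖(inner ℂ u ψ : ℂ)‖ + ‖(inner ℂ u w : ℂ)‖ := norm_sub_le _ _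
  have hq : ‖β‖ ≤ ‖ψ‖ := by
    have := norm_inner_le_norm (𝕜 := ℂ) v ψ; rwa [hv, one_mul] at this
  have hp : ‖(inner ℂ u v : ℂ)‖ ≤ 1 := by
    have := norm_inner_le_norm (𝕜 := ℂ) u v; simp [hu, hv] at this; exact this
  exact real_key' ‖(inner ℂ u v : ℂ)‖ ‖β‖ ‖(inner ℂ u ψ : ℂ)‖ ‖(inner ℂ u w : ℂ)‖ ‖ψ‖
    (norm_nonneg _) (norm_nonneg _) (norm_nonneg _) (norm_nonneg _) huv hp hq hc htri

lemma op_re' {E : Type*} [NormedAddCommGroup E] [InnerProductSpace ℂ E]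
    (r s : ℝ) (x ψ : E) :
    (inner ℂ (((r : ℂ) • ψ) + (((s : ℝ) : ℂ) * (inner ℂ x ψ : ℂ)) • x) ψ : ℂ).re
      = r * ‖ψ‖ ^ 2 + s * ‖(inner ℂ x ψ : ℂ)‖ ^ 2 := by
  have hre : (inner ℂ ψ x : ℂ).re = (inner ℂ x ψ : ℂ).re := by
    rw [← inner_conj_symm ψ x]; exact Complex.conj_re _
  have him : (inner ℂ ψ x : ℂ).im = -(inner ℂ x ψ : ℂ).im := by
    rw [← inner_conj_symm ψ x]; exact Complex.conj_im _
  rw [inner_add_left, inner_smul_left, inner_smul_left, inner_self_eq_norm_sq_to_K]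
  simp [Complex.ext_iff, Complex.mul_re, Complex.sq_norm,
    Complex.normSq_apply, Complex.add_re, Complex.conj_re, Complex.conj_im, map_mul,
    hre, him, ← Complex.ofReal_pow]
  ring

lemma op_selfadj' {E : Type*} [NormedAddCommGroup E] [InnerProductSpace ℂ E]
    (r s : ℝ) (x ψ φ : E) :
    (inner ℂ (((r : ℂ) • ψ) + ((((s : ℝ) : ℂ) * (inner ℂ x ψ : ℂ)) • x)) φ : ℂ)
      = inner ℂ ψ (((r : ℂ) • φ) + ((((s : ℝ) : ℂ) * (inner ℂ x φ : ℂ)) • x)) := by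
  simp only [inner_add_left, inner_add_right, inner_smul_left, inner_smul_right,
    map_mul, Complex.conj_ofReal, inner_conj_symm]
  ring

lemma op_contraction' {E : Type*} [NormedAddCommGroup E] [InnerProductSpace ℂ E]
    (r s : ℝ) (hr : 0 ≤ r) (hs : 0 ≤ s) (hrs : r + s ≤ 1) (x : E) (hx : ‖x‖ = 1) (ψ : E) :
    ‖((r : ℂ) • ψ) + ((((s : ℝ) : ℂ) * (inner ℂ x ψ : ℂ)) • x)‖ ≤ ‖ψ‖ := by
  have hcs : ‖(inner ℂ x ψ : ℂ)‖ ≤ ‖ψ‖ := by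
    have := norm_inner_le_norm (𝕜 := ℂ) x ψ; rwa [hx, one_mul] at this
  calc ‖((r : ℂ) • ψ) + ((((s : ℝ) : ℂ) * (inner ℂ x ψ : ℂ)) • x)‖
      ≤ ‖((r : ℂ) • ψ)‖ + ‖((((s : ℝ) : ℂ) * (inner ℂ x ψ : ℂ)) • x)‖ := norm_add_le _ _
    _ = r * ‖ψ‖ + s * ‖(inner ℂ x ψ : ℂ)‖ := by
        simp [norm_smul, hx, abs_of_nonneg hr, abs_of_nonneg hs, mul_assoc]
    _ ≤ r * ‖ψ‖ + s * ‖ψ‖ := by nlinarith [norm_nonneg ψ]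
    _ ≤ 1 * ‖ψ‖ := by nlinarith [norm_nonneg ψ]
    _ = ‖ψ‖ := one_mul _

/-- For unit vectors `u, v` with `2|⟨u,v⟩|² ≥ 1` and `ρ ∈ [1/2, 1]`, the
operators `Uψ = ρψ + (1-ρ)⟨u,ψ⟩u` and `Vψ = (2ρ-1)ψ + 2(1-ρ)⟨v,ψ⟩v` are
self-adjoint positive contractions and satisfy
`(2ρ - 1 + 2(1-ρ)|⟨u,v⟩|²) V ≤ U` as quadratic forms. -/
theorem projection_operators_ineq {E : Type*} [NormedAddCommGroup E]
    [InnerProductSpace ℂ E]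
    (u v : E) (hu : ‖u‖ = 1) (hv : ‖v‖ = 1)
    (huv : 1 ≤ 2 * ‖(inner ℂ u v : ℂ)‖ ^ 2)
    (ρ : ℝ) (hρ : ρ ∈ Set.Icc (1 / 2 : ℝ) 1)
    (U V : E → E)
    (hU : ∀ ψ, U ψ = ((ρ : ℂ) • ψ) + ((((1 - ρ : ℝ) : ℂ) * (inner ℂ u ψ : ℂ)) • u))
    (hV : ∀ ψ, V ψ = (((2 * ρ - 1 : ℝ) : ℂ) • ψ)
      + ((((2 * (1 - ρ) : ℝ) : ℂ) * (inner ℂ v ψ : ℂ)) • v)) :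
    (∀ ψ φ : E, (inner ℂ (U ψ) φ : ℂ) = inner ℂ ψ (U φ))
    ∧ (∀ ψ : E, 0 ≤ (inner ℂ (U ψ) ψ : ℂ).re)
    ∧ (∀ ψ : E, ‖U ψ‖ ≤ ‖ψ‖)
    ∧ (∀ ψ φ : E, (inner ℂ (V ψ) φ : ℂ) = inner ℂ ψ (V φ))
    ∧ (∀ ψ : E, 0 ≤ (inner ℂ (V ψ) ψ : ℂ).re)
    ∧ (∀ ψ : E, ‖V ψ‖ ≤ ‖ψ‖)
    ∧ (∀ ψ : E, (2 * ρ - 1 + 2 * (1 - ρ) * ‖(inner ℂ u v : ℂ)‖ ^ 2)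
        * (inner ℂ (V ψ) ψ : ℂ).re ≤ (inner ℂ (U ψ) ψ : ℂ).re) := by
  obtain ⟨hρ1, hρ2⟩ := hρ
  have ht1 : ‖(inner ℂ u v : ℂ)‖ ^ 2 ≤ 1 := by
    have h := norm_inner_le_norm (𝕜 := ℂ) u v
    rw [hu, hv] at h
    nlinarith [norm_nonneg (inner ℂ u v : ℂ)]
  refine ⟨fun ψ φ => ?_, fun ψ => ?_, fun ψ => ?_, fun ψ φ => ?_, fun ψ => ?_, fun ψ => ?_,
    fun ψ => ?_⟩
  · rw [hU ψ, hU φ]; exact op_selfadj' ρ (1 - ρ) u ψ φ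
  · rw [hU ψ, op_re']
    nlinarith [sq_nonneg ‖ψ‖, sq_nonneg ‖(inner ℂ u ψ : ℂ)‖]
  · rw [hU ψ]
    exact op_contraction' ρ (1 - ρ) (by linarith) (by linarith) (by linarith) u hu ψ
  · rw [hV ψ, hV φ]; exact op_selfadj' (2 * ρ - 1) (2 * (1 - ρ)) v ψ φ
  · rw [hV ψ, op_re']
    nlinarith [sq_nonneg ‖ψ‖, sq_nonneg ‖(inner ℂ v ψ : ℂ)‖]
  · rw [hV ψ]
    exact op_contraction' (2 * ρ - 1) (2 * (1 - ρ)) (by linarith) (by linarith) (by linarith) v hv ψ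
  · rw [hU ψ, hV ψ, op_re', op_re']
    have hkey := inner_key' u v hu hv huv ψ
    have hb : ‖(inner ℂ v ψ : ℂ)‖ ^ 2 ≤ ‖ψ‖ ^ 2 := by
      have := norm_inner_le_norm (𝕜 := ℂ) v ψ
      rw [hv, one_mul] at this
      nlinarith [norm_nonneg (inner ℂ v ψ : ℂ)]
    set a := ‖(inner ℂ u ψ : ℂ)‖ ^ 2
    set b := ‖(inner ℂ v ψ : ℂ)‖ ^ 2
    set t := ‖(inner ℂ u v : ℂ)‖ ^ 2
    set n := ‖ψ‖ ^ 2
    have ha0 : 0 ≤ a := sq_nonneg _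
    have hb0 : 0 ≤ b := sq_nonneg _
    nlinarith [mul_nonneg (by linarith : (0:ℝ) ≤ 1 - ρ) (by linarith : (0:ℝ) ≤ a + n - 2 * t * b),
      mul_nonneg (mul_nonneg (mul_nonneg (by linarith : (0:ℝ) ≤ 1 - ρ)
        (by linarith : (0:ℝ) ≤ 1 - t)) (by linarith : (0:ℝ) ≤ 2 * ρ - 1))
        (by linarith : (0:ℝ) ≤ n - b)]
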